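/- Let U, V, W, X be series-parallel pomsets with U ∥ V = W ∥ X. Then there exist series-parallel pomsets Y₀, Y₁, Z₀, Z₁ such that U = Y₀ ∥ Y₁, V = Z₀ ∥ Z₁, W = Y₀ ∥ Z₀, and X = Y₁ ∥ Z₁. -/

import Mathlib

namespace WBKA

/-- Series-parallel terms over an alphabet `A`. -/
inductive SPTerm (A : Type) : Type
  | one : SPTerm A
  | atom : A → SPTerm A
  | seq : SPTerm A → SPTerm A → SPTerm A
  | par : SPTerm A → SPTerm A → SPTerm A

/-- The congruence generated by the series-parallel pomset axioms:
associativity of both compositions, commutativity of parallel composition,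
and the empty pomset acting as unit for both. -/
inductive SPEquiv {A : Type} : SPTerm A → SPTerm A → Prop
  | refl (u : SPTerm A) : SPEquiv u u
  | symm {u v : SPTerm A} : SPEquiv u v → SPEquiv v u
  | trans {u v w : SPTerm A} : SPEquiv u v → SPEquiv v w → SPEquiv u w
  | seqCongr {u u' v v' : SPTerm A} :
      SPEquiv u u' → SPEquiv v v' → SPEquiv (u.seq v) (u'.seq v')
  | parCongr {u u' v v' : SPTerm A} :
      SPEquiv u u' → SPEquiv v v' → SPEquiv (u.par v) (u'.par v')
  | seqAssoc (u v w : SPTerm A) : SPEquiv ((u.seq v).seq w) (u.seq (v.seq w))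
  | parAssoc (u v w : SPTerm A) : SPEquiv ((u.par v).par w) (u.par (v.par w))
  | parComm (u v : SPTerm A) : SPEquiv (u.par v) (v.par u)
  | seqOneLeft (u : SPTerm A) : SPEquiv (SPTerm.one.seq u) u
  | seqOneRight (u : SPTerm A) : SPEquiv (u.seq SPTerm.one) u
  | parOne (u : SPTerm A) : SPEquiv (u.par SPTerm.one) u

instance spSetoid (A : Type) : Setoid (SPTerm A) :=
  ⟨SPEquiv, SPEquiv.refl, SPEquiv.symm, SPEquiv.trans⟩

/-- Series-parallel pomsets over `A`, as the free algebra on the sp-pomset axioms. -/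
def Pomset (A : Type) : Type := Quotient (spSetoid A)

namespace Pomset

variable {A : Type}

def mk (u : SPTerm A) : Pomset A := Quotient.mk (spSetoid A) u

/-- The empty pomset `1`. -/
def eps : Pomset A := mk SPTerm.one

/-- The primitive pomset consisting of a single event labelled `a`. -/
def atom (a : A) : Pomset A := mk (SPTerm.atom a)

/-- Sequential composition of pomsets. -/
def seq : Pomset A → Pomset A → Pomset A :=
  Quotient.lift₂ (fun u v => mk (u.seq v))
    (fun _ _ _ _ hu hv => Quotient.sound (SPEquiv.seqCongr hu hv))

/-- Parallel composition of pomsets. -/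
def par : Pomset A → Pomset A → Pomset A :=
  Quotient.lift₂ (fun u v => mk (u.par v))
    (fun _ _ _ _ hu hv => Quotient.sound (SPEquiv.parCongr hu hv))

/-- `U` is the empty pomset. -/
def IsEmptyP (U : Pomset A) : Prop := U = eps

/-- `U` is primitive: it consists of a single labelled event. -/
def Primitive (U : Pomset A) : Prop := ∃ a : A, U = atom a

/-- `U` is sequential: a sequential composition of two non-empty pomsets. -/
def Sequential (U : Pomset A) : Prop :=
  ∃ V W : Pomset A, V ≠ eps ∧ W ≠ eps ∧ U = seq V W

/-- `U` is parallel: a parallel composition of two non-empty pomsets. -/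
def Parallel (U : Pomset A) : Prop :=
  ∃ V W : Pomset A, V ≠ eps ∧ W ≠ eps ∧ U = par V W

/-- `U` is a sequential prime. -/
def SeqPrime (U : Pomset A) : Prop :=
  U ≠ eps ∧ ∀ V W : Pomset A, U = seq V W → V = eps ∨ W = eps

/-- `U` is a parallel prime. -/
def ParPrime (U : Pomset A) : Prop :=
  U ≠ eps ∧ ∀ V W : Pomset A, U = par V W → V = eps ∨ W = eps

/-- Sequential product of a list of pomsets. -/
def seqProd (l : List (Pomset A)) : Pomset A := l.foldr seq eps

/-- Parallel product of a list of pomsets. -/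
def parProd (l : List (Pomset A)) : Pomset A := l.foldr par eps

end Pomset

/-- Pointwise sequential composition of pomset languages. -/
def langSeq {A : Type} (L M : Set (Pomset A)) : Set (Pomset A) :=
  Set.image2 Pomset.seq L M

/-- Pointwise parallel composition of pomset languages. -/
def langPar {A : Type} (L M : Set (Pomset A)) : Set (Pomset A) :=
  Set.image2 Pomset.par L M

/-- `n`-fold sequential power of a language. -/
def langPow {A : Type} (L : Set (Pomset A)) : ℕ → Set (Pomset A)
  | 0 => {Pomset.eps}
  | n + 1 => langSeq L (langPow L n)

/-- Kleene closure of a pomset language. -/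
def langStar {A : Type} (L : Set (Pomset A)) : Set (Pomset A) :=
  ⋃ n : ℕ, langPow L n

/-- Series-rational expressions over `A`. -/
inductive SR (A : Type) : Type
  | zero : SR A
  | one : SR A
  | atom : A → SR A
  | plus : SR A → SR A → SR A
  | seq : SR A → SR A → SR A
  | par : SR A → SR A → SR A
  | star : SR A → SR A

/-- The sp-language semantics of series-rational expressions. -/
def sem {A : Type} : SR A → Set (Pomset A)
  | .zero => ∅
  | .one => {Pomset.eps}
  | .atom a => {Pomset.atom a}
  | .plus e f => sem e ∪ sem f
  | .seq e f => langSeq (sem e) (sem f)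
  | .par e f => langPar (sem e) (sem f)
  | .star e => langStar (sem e)

/-- The syntactic predicate `F` characterising acceptance of the empty pomset. -/
inductive EF {A : Type} : SR A → Prop
  | one : EF SR.one
  | plusLeft {e : SR A} (f : SR A) : EF e → EF (SR.plus e f)
  | plusRight (e : SR A) {f : SR A} : EF f → EF (SR.plus e f)
  | seq {e f : SR A} : EF e → EF f → EF (SR.seq e f)
  | par {e f : SR A} : EF e → EF f → EF (SR.par e f)
  | star (e : SR A) : EF (SR.star e)

/-- Pomset automata. -/
structure PA (A : Type) (Q : Type) where
  acc : Set Q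
  δ : Q → A → Set Q
  γ : Q → Multiset Q → Set Q

/-- The run relation of a pomset automaton. -/
inductive Run {A Q : Type} (M : PA A Q) : Q → Pomset A → Q → Prop
  | triv (q : Q) : Run M q Pomset.eps q
  | seqUnit {q : Q} {a : A} {q' : Q} :
      q' ∈ M.δ q a → Run M q (Pomset.atom a) q'
  | comp {q : Q} {U : Pomset A} {q'' : Q} {V : Pomset A} {q' : Q} :
      Run M q U q'' → Run M q'' V q' → Run M q (U.seq V) q'
  | parUnit {q q' : Q} (l : List (Q × Pomset A × Q)) :
      q' ∈ M.γ q (↑(l.map Prod.fst) : Multiset Q) →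
      (∀ x ∈ l, x.2.2 ∈ M.acc) →
      (∀ x ∈ l, Run M x.1 x.2.1 x.2.2) →
      Run M q (Pomset.parProd (l.map fun x => x.2.1)) q'

/-- Language of a state of a pomset automaton. -/
def PA.lang {A Q : Type} (M : PA A Q) (q : Q) : Set (Pomset A) :=
  {U | ∃ q' ∈ M.acc, Run M q U q'}

/-- The triple `q →^U q'` matches the trivial-run rule. -/
def TrivialRun {A Q : Type} (_M : PA A Q) (q : Q) (U : Pomset A) (q' : Q) : Prop :=
  U = Pomset.eps ∧ q = q'

/-- `q →^U q'` is a sequential unit run. -/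
def SeqUnitRun {A Q : Type} (M : PA A Q) (q : Q) (U : Pomset A) (q' : Q) : Prop :=
  ∃ a : A, U = Pomset.atom a ∧ q' ∈ M.δ q a

/-- `q →^U q'` is a parallel unit run. -/
def ParUnitRun {A Q : Type} (M : PA A Q) (q : Q) (U : Pomset A) (q' : Q) : Prop :=
  ∃ l : List (Q × Pomset A × Q),
    q' ∈ M.γ q (↑(l.map Prod.fst) : Multiset Q) ∧
    (∀ x ∈ l, x.2.2 ∈ M.acc ∧ Run M x.1 x.2.1 x.2.2) ∧
    U = Pomset.parProd (l.map fun x => x.2.1)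

/-- `q →^U q'` is a unit run: a sequential or a parallel unit run. -/
def UnitRun {A Q : Type} (M : PA A Q) (q : Q) (U : Pomset A) (q' : Q) : Prop :=
  SeqUnitRun M q U q' ∨ ParUnitRun M q U q'

/-- `q →^U q'` is a composite run: a sequential composition of two non-trivial runs. -/
def CompositeRun {A Q : Type} (M : PA A Q) (q : Q) (U : Pomset A) (q' : Q) : Prop :=
  ∃ (V W : Pomset A) (q'' : Q),
    U = V.seq W ∧ Run M q V q'' ∧ Run M q'' W q' ∧
    ¬ TrivialRun M q V q'' ∧ ¬ TrivialRun M q'' W q'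

/-- The support preorder: `Supports M q' q` means `q' ⪯ q`. -/
inductive Supports {A Q : Type} (M : PA A Q) : Q → Q → Prop
  | refl (q : Q) : Supports M q q
  | trans {q r p : Q} : Supports M q r → Supports M r p → Supports M q p
  | deltaStep {q : Q} {a : A} {q' : Q} : q' ∈ M.δ q a → Supports M q' q
  | gammaStep {q : Q} {φ : Multiset Q} {q' : Q} : q' ∈ M.γ q φ → Supports M q' q
  | forkStep {q : Q} {φ : Multiset Q} {r : Q} :
      r ∈ φ → (M.γ q φ).Nonempty → Supports M r q

/-- A pomset automaton is fork-acyclic when every fork target `r` of `q`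
satisfies `r ≺ q`, i.e. `q ⋠ r`. -/
def ForkAcyclic {A Q : Type} (M : PA A Q) : Prop :=
  ∀ (q : Q) (φ : Multiset Q) (r : Q),
    r ∈ φ → (M.γ q φ).Nonempty → ¬ Supports M q r

/-- A set of states is support-closed. -/
def SupportClosed {A Q : Type} (M : PA A Q) (S : Set Q) : Prop :=
  ∀ q ∈ S, ∀ q' : Q, Supports M q' q → q' ∈ S

/-- Restriction of a pomset automaton to a set of states. -/
def PA.restrict {A Q : Type} (M : PA A Q) (S : Set Q) : PA A {q : Q // q ∈ S} where
  acc := {q | q.val ∈ M.acc}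
  δ := fun q a => {r | r.val ∈ M.δ q.val a}
  γ := fun q φ => {r | r.val ∈ M.γ q.val (φ.map Subtype.val)}

/-- `n`-forking automata. -/
def NForking {A Q : Type} (M : PA A Q) (n : ℕ) : Prop :=
  ∀ (q : Q) (φ : Multiset Q), (M.γ q φ).Nonempty → n ≤ Multiset.card φ

/-- Parsimonious automata: no fork target accepts the empty pomset. -/
def Parsimonious {A Q : Type} (M : PA A Q) : Prop :=
  ∀ (p : Q) (φ : Multiset Q) (q : Q),
    q ∈ φ → (M.γ p φ).Nonempty → Pomset.eps ∉ M.lang q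

/-- Flat-branching automata: forks from fork targets never reach accepting states. -/
def FlatBranching {A Q : Type} (M : PA A Q) : Prop :=
  ∀ (p : Q) (φ : Multiset Q) (q : Q),
    q ∈ φ → (M.γ p φ).Nonempty → ∀ ψ : Multiset Q, M.γ q ψ ∩ M.acc = ∅

/-- Well-structured pomset automata. -/
def WellStructured {A Q : Type} (M : PA A Q) : Prop :=
  (∀ (q : Q) (φ : Multiset Q), (M.γ q φ).Nonempty → 2 ≤ Multiset.card φ) ∧
  ∀ (p : Q) (φ : Multiset Q) (q : Q), q ∈ φ → (M.γ p φ).Nonempty →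
    q ∉ M.acc ∧ ∀ ψ : Multiset Q, M.γ q ψ ∩ M.acc = ∅

/-- The relation `⇝` characterising runs labelled by the empty pomset. -/
inductive Leadsto {A Q : Type} (M : PA A Q) : Q → Q → Prop
  | refl (p : Q) : Leadsto M p p
  | trans {p r q : Q} : Leadsto M p r → Leadsto M r q → Leadsto M p q
  | fork {p q : Q} (l : List (Q × Q)) :
      q ∈ M.γ p (↑(l.map Prod.fst) : Multiset Q) →
      (∀ x ∈ l, x.2 ∈ M.acc) →
      (∀ x ∈ l, Leadsto M x.1 x.2) →
      Leadsto M p q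

/-- Concatenate each expression of a set with `f` on the right. -/
def seqAfter {A : Type} (T : Set (SR A)) (f : SR A) : Set (SR A) :=
  (fun g => SR.seq g f) '' T

/-- Antimirov-style sequential derivatives of sr-expressions. -/
def deltaS {A : Type} : SR A → A → Set (SR A)
  | .zero, _ => ∅
  | .one, _ => ∅
  | .atom b, a => {g | g = SR.one ∧ a = b}
  | .plus e f, a => deltaS e a ∪ deltaS f a
  | .seq e f, a => seqAfter (deltaS e a) f ∪ {g | g ∈ deltaS f a ∧ EF e}
  | .par _ _, _ => ∅
  | .star e, a => seqAfter (deltaS e a) (SR.star e)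

/-- Antimirov-style parallel derivatives of sr-expressions. -/
def gammaS {A : Type} : SR A → Multiset (SR A) → Set (SR A)
  | .zero, _ => ∅
  | .one, _ => ∅
  | .atom _, _ => ∅
  | .plus e f, φ => gammaS e φ ∪ gammaS f φ
  | .seq e f, φ => seqAfter (gammaS e φ) f ∪ {g | g ∈ gammaS f φ ∧ EF e}
  | .par e f, φ => {g | g = SR.one ∧ φ = {e, f}}
  | .star e, φ => seqAfter (gammaS e φ) (SR.star e)

/-- The syntactic pomset automaton on sr-expressions. -/
def synPA (A : Type) : PA A (SR A) where
  acc := {e | EF e}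
  δ := deltaS
  γ := gammaS

/-- The parallel-nesting depth of an sr-expression. -/
def pdepth {A : Type} : SR A → ℕ
  | .zero => 0
  | .one => 0
  | .atom _ => 0
  | .plus e f => max (pdepth e) (pdepth f)
  | .seq e f => max (pdepth e) (pdepth f)
  | .par e f => max (pdepth e) (pdepth f) + 1
  | .star e => pdepth e

/-- A substitution `ζ : Σ → 2^{SP(Δ)}` is atomic. -/
def Atomic {A B : Type} (ζ : A → Set (Pomset B)) : Prop :=
  (∀ a : A, ∀ U ∈ ζ a, Pomset.SeqPrime U) ∧
  (∀ a b : A, (ζ a ∩ ζ b).Nonempty ↔ a = b)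

/-- Extension of a substitution to words. -/
def substWord {A B : Type} (ζ : A → Set (Pomset B)) : List A → Set (Pomset B)
  | [] => {Pomset.eps}
  | a :: w => langSeq (ζ a) (substWord ζ w)

/-- Extension of a substitution to word languages. -/
def substLang {A B : Type} (ζ : A → Set (Pomset B)) (L : Set (List A)) :
    Set (Pomset B) :=
  ⋃ w ∈ L, substWord ζ w

/-- `L_A(α)` for a set `α` of states: the atom language of `α`. -/
def atomLang {Q U : Type} (LA : Q → Set U) (α : Set Q) : Set U :=
  (⋂ q ∈ α, LA q) \ (⋃ (q : Q) (_ : q ∉ α), LA q)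


namespace LeviAux

open Pomset

variable {A : Type}

/-- Size (number of atoms) of a term. -/
def sz : SPTerm A → ℕ
  | .one => 0
  | .atom _ => 1
  | .seq u v => sz u + sz v
  | .par u v => sz u + sz v

lemma szEquiv {u v : SPTerm A} (h : SPEquiv u v) : sz u = sz v := by
  induction h <;> simp -failIfUnchanged [sz] at * <;> omega

lemma mk_seq (u v : SPTerm A) : Pomset.mk (u.seq v) = (Pomset.mk u).seq (Pomset.mk v) := rfl
lemma mk_par (u v : SPTerm A) : Pomset.mk (u.par v) = (Pomset.mk u).par (Pomset.mk v) := rfl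

lemma seq_eps_left (X : Pomset A) : Pomset.seq Pomset.eps X = X :=
  Quotient.inductionOn X fun t => Quotient.sound (SPEquiv.seqOneLeft t)

lemma seq_eps_right (X : Pomset A) : Pomset.seq X Pomset.eps = X :=
  Quotient.inductionOn X fun t => Quotient.sound (SPEquiv.seqOneRight t)

lemma par_eps (X : Pomset A) : Pomset.par X Pomset.eps = X :=
  Quotient.inductionOn X fun t => Quotient.sound (SPEquiv.parOne t)

lemma par_comm (X Y : Pomset A) : Pomset.par X Y = Pomset.par Y X :=
  Quotient.inductionOn₂ X Y fun t s => Quotient.sound (SPEquiv.parComm t s)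

lemma par_assoc (X Y Z : Pomset A) :
    Pomset.par (Pomset.par X Y) Z = Pomset.par X (Pomset.par Y Z) :=
  Quotient.inductionOn₂ X Y (fun t s => Quotient.inductionOn Z fun r =>
    Quotient.sound (SPEquiv.parAssoc t s r))

lemma eps_par (X : Pomset A) : Pomset.par Pomset.eps X = X := by
  rw [par_comm]; exact par_eps X

instance : CommMonoid (Pomset A) where
  mul := Pomset.par
  one := Pomset.eps
  mul_assoc := par_assoc
  one_mul := eps_par
  mul_one := par_eps
  mul_comm := par_comm

lemma mul_def (X Y : Pomset A) : X * Y = X.par Y := rfl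
lemma one_def : (1 : Pomset A) = Pomset.eps := rfl

lemma sz_zero_eps {u : SPTerm A} (h : sz u = 0) : Pomset.mk u = Pomset.eps := by
  induction u with
  | one => rfl
  | atom a => simp [sz] at h
  | seq u v ihu ihv =>
      simp [sz] at h
      rw [mk_seq, ihu h.1, ihv h.2, seq_eps_left]
  | par u v ihu ihv =>
      simp [sz] at h
      rw [mk_par, ihu h.1, ihv h.2, par_eps]

/-- Multiset of parallel components of a term (as pomsets). -/
def comps : SPTerm A → Multiset (Pomset A)
  | .one => 0
  | .atom a => {Pomset.mk (.atom a)}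
  | .seq u v =>
      if sz u = 0 then comps v
      else if sz v = 0 then comps u
      else {Pomset.mk (u.seq v)}
  | .par u v => comps u + comps v

lemma comps_zero {u : SPTerm A} (h : sz u = 0) : comps u = 0 := by
  induction u with
  | one => rfl
  | atom a => simp [sz] at h
  | seq u v ihu ihv =>
      simp [sz] at h
      simp [comps, h.1, ihv h.2]
  | par u v ihu ihv =>
      simp [sz] at h
      simp [comps, ihu h.1, ihv h.2]

lemma mk_seq_eps_left {u : SPTerm A} (h : sz u = 0) (v : SPTerm A) :
    Pomset.mk (u.seq v) = Pomset.mk v := by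
  rw [mk_seq, sz_zero_eps h, seq_eps_left]

lemma mk_seq_eps_right (u : SPTerm A) {v : SPTerm A} (h : sz v = 0) :
    Pomset.mk (u.seq v) = Pomset.mk u := by
  rw [mk_seq, sz_zero_eps h, seq_eps_right]

lemma compsEquiv {u v : SPTerm A} (h : SPEquiv u v) : comps u = comps v := by
  induction h with
  | refl u => rfl
  | symm h ih => exact ih.symm
  | trans h1 h2 ih1 ih2 => exact ih1.trans ih2
  | @seqCongr u u' v v' hu hv ihu ihv =>
      have h1 := szEquiv hu
      have h2 := szEquiv hv
      have hmk : Pomset.mk (u.seq v) = Pomset.mk (u'.seq v') :=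
        Quotient.sound (SPEquiv.seqCongr hu hv)
      simp only [comps, ← h1, ← h2]
      by_cases e1 : sz u = 0
      · simp [e1, ihv]
      · by_cases e2 : sz v = 0 <;> simp [e1, e2, ihu, hmk]
  | parCongr hu hv ihu ihv => simp [comps, ihu, ihv]
  | seqAssoc u v w =>
      have hA : Pomset.mk ((u.seq v).seq w) = Pomset.mk (u.seq (v.seq w)) :=
        Quotient.sound (SPEquiv.seqAssoc u v w)
      by_cases e1 : sz u = 0 <;> by_cases e2 : sz v = 0 <;> by_cases e3 : sz w = 0 <;>
        simp [comps, sz, e1, e2, e3] <;>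
        first
        | rfl
        | rw [hA, mk_seq_eps_left e1]
        | rw [← hA, mk_seq_eps_right _ e3]
        | rw [hA]
  | parAssoc u v w => simp [comps, add_assoc]
  | parComm u v => simp [comps, add_comm]
  | seqOneLeft u => simp [comps, sz]
  | seqOneRight u =>
      by_cases e : sz u = 0 <;> simp [comps, sz, e, comps_zero]
  | parOne u => simp [comps]

/-- Parallel components of a pomset. -/
def P : Pomset A → Multiset (Pomset A) :=
  Quotient.lift comps fun _ _ h => compsEquiv h

lemma P_par (X Y : Pomset A) : P (X.par Y) = P X + P Y :=
  Quotient.inductionOn₂ X Y fun _ _ => rfl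

lemma prod_comps (t : SPTerm A) : (comps t).prod = Pomset.mk t := by
  induction t with
  | one => rfl
  | atom a => simp [comps]
  | seq u v ihu ihv =>
      by_cases e1 : sz u = 0
      · simp [comps, e1, ihv, mk_seq_eps_left e1]
      · by_cases e2 : sz v = 0
        · simp [comps, e1, e2, ihu, mk_seq_eps_right _ e2]
        · simp [comps, e1, e2]
  | par u v ihu ihv =>
      simp [comps, Multiset.prod_add, ihu, ihv, mk_par, mul_def]

lemma P_prod (X : Pomset A) : (P X).prod = X :=
  Quotient.inductionOn X fun t => prod_comps t

/-- Refinement (Riesz) property for multisets. -/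
lemma multiset_refine {α : Type} (a b c d : Multiset α) (h : a + b = c + d) :
    ∃ y0 y1 z0 z1 : Multiset α,
      a = y0 + y1 ∧ b = z0 + z1 ∧ c = y0 + z0 ∧ d = y1 + z1 := by
  classical
  refine ⟨a ∩ c, a - c, c - a, b - (c - a), ?_, ?_, ?_, ?_⟩ <;>
  · ext x
    have hc := congrArg (Multiset.count x) h
    simp only [Multiset.count_add, Multiset.count_inter, Multiset.count_sub] at *
    omega

end LeviAux

/-- Levi's lemma for parallel composition of sp-pomsets. -/
theorem pomset_levi_parallel {A : Type} (U V W X : Pomset A)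
    (h : U.par V = W.par X) :
    ∃ Y₀ Y₁ Z₀ Z₁ : Pomset A,
      U = Y₀.par Y₁ ∧ V = Z₀.par Z₁ ∧ W = Y₀.par Z₀ ∧ X = Y₁.par Z₁ := by
  classical
  open LeviAux in
  have hP : P U + P V = P W + P X := by rw [← P_par, ← P_par, h]
  obtain ⟨y0, y1, z0, z1, h1, h2, h3, h4⟩ := multiset_refine _ _ _ _ hP
  refine ⟨y0.prod, y1.prod, z0.prod, z1.prod, ?_, ?_, ?_, ?_⟩
  · rw [← P_prod U, h1, Multiset.prod_add]; rfl
  · rw [← P_prod V, h2, Multiset.prod_add]; rfl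
  · rw [← P_prod W, h3, Multiset.prod_add]; rfl
  · rw [← P_prod X, h4, Multiset.prod_add]; rfl

end WBKA
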